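/- Let A ∈ ℝ^{m×n}, b ∈ ℝ^m, λ > 0, and let x ∈ ℝ^n be a point where the slack s(x) := Ax − b has all entries strictly positive. Write S_x := diag(s(x)), A_x := S_x⁻¹A, and define ψ(x) ∈ ℝ^m by ψ_i(x) := [A_x(A_xᵀA_x + λI)⁻¹A_xᵀ]_{ii}. Then the function f(x) := ½·log det(AᵀS_x⁻²A + λI) is differentiable at x with gradient ∇f(x) = −A_xᵀψ(x). -/

import Mathlib

open Matrix

/-- The slack-rescaled constraint matrix `A_x = S_x⁻¹ A` where `S_x = diag(Ax − b)`. -/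
noncomputable def Amat {m n : ℕ} (A : Matrix (Fin m) (Fin n) ℝ) (b : Fin m → ℝ)
    (y : Fin n → ℝ) : Matrix (Fin m) (Fin n) ℝ :=
  (Matrix.diagonal (A.mulVec y - b))⁻¹ * A

/-- The regularized leverage scores `ψᵢ(x) = [A_x(A_xᵀA_x + λI)⁻¹A_xᵀ]_{ii}`. -/
noncomputable def psiReg {m n : ℕ} (A : Matrix (Fin m) (Fin n) ℝ) (b : Fin m → ℝ)
    (lam : ℝ) (y : Fin n → ℝ) : Fin m → ℝ :=
  fun i =>
    (Amat A b y *
      ((Amat A b y)ᵀ * Amat A b y + lam • (1 : Matrix (Fin n) (Fin n) ℝ))⁻¹ *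
      (Amat A b y)ᵀ) i i

/-- The regularized volumetric barrier `f(x) = ½ log det(AᵀS_x⁻²A + λI)`. -/
noncomputable def volBarrier {m n : ℕ} (A : Matrix (Fin m) (Fin n) ℝ) (b : Fin m → ℝ)
    (lam : ℝ) (y : Fin n → ℝ) : ℝ :=
  (1 / 2) *
    Real.log (((Amat A b y)ᵀ * Amat A b y + lam • (1 : Matrix (Fin n) (Fin n) ℝ)).det)


/-- Determinant as a continuous multilinear map in the rows. -/
noncomputable def detCML (n : ℕ) : ContinuousMultilinearMap ℝ (fun _ : Fin n => (Fin n → ℝ)) ℝ :=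
  ∑ σ : Equiv.Perm (Fin n),
    ((Equiv.Perm.sign σ : ℤ) : ℝ) •
      (ContinuousMultilinearMap.mkPiAlgebra ℝ (Fin n) ℝ).compContinuousLinearMap
        (fun i => ContinuousLinearMap.proj (σ i))

lemma detCML_apply {n : ℕ} (r : Fin n → Fin n → ℝ) :
    detCML n r = (Matrix.of r).det := by
  rw [← Matrix.det_transpose, Matrix.det_apply]
  simp [detCML, ContinuousMultilinearMap.sum_apply, ContinuousMultilinearMap.smul_apply,
    ContinuousMultilinearMap.compContinuousLinearMap_apply,
    ContinuousMultilinearMap.mkPiAlgebra_apply, Units.smul_def, zsmul_eq_mul]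

lemma det_updateRow_eq_sum {n : ℕ} (M : Matrix (Fin n) (Fin n) ℝ) (k : Fin n) (r : Fin n → ℝ) :
    (M.updateRow k r).det = ∑ l, r l * M.adjugate l k := by
  rw [← Matrix.cramer_transpose_apply]
  have hr : r = ∑ l, r l • (Pi.single l 1 : Fin n → ℝ) := by
    funext j
    simp [Pi.single_apply]
  conv_lhs => rw [hr]
  rw [map_sum, Finset.sum_apply]
  refine Finset.sum_congr rfl fun l _ => ?_
  rw [_root_.map_smul]
  simp [Matrix.adjugate_def, smul_eq_mul]

lemma detCML_update {n : ℕ} (r : Fin n → Fin n → ℝ) (k : Fin n) (w : Fin n → ℝ) :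
    detCML n (Function.update r k w) = ∑ l, w l * (Matrix.of r).adjugate l k := by
  rw [detCML_apply,
    show (Matrix.of (Function.update r k w)) = (Matrix.of r).updateRow k w from rfl,
    det_updateRow_eq_sum]

noncomputable def NfunAux {m n : ℕ} (A : Matrix (Fin m) (Fin n) ℝ) (b : Fin m → ℝ) (lam : ℝ)
    (y : Fin n → ℝ) : Fin n → Fin n → ℝ := fun k l =>
  (∑ i, (A i k * A i l) * (((A.mulVec y - b) i)⁻¹ * ((A.mulVec y - b) i)⁻¹)) +
    (if k = l then lam else 0)

lemma Amat_eq {m n : ℕ} (A : Matrix (Fin m) (Fin n) ℝ) (b : Fin m → ℝ) (y : Fin n → ℝ)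
    (hy : ∀ i, (A.mulVec y - b) i ≠ 0) :
    Amat A b y = Matrix.of (fun i j => ((A.mulVec y - b) i)⁻¹ * A i j) := by
  have hinvd : (Matrix.diagonal (A.mulVec y - b))⁻¹
      = Matrix.diagonal (fun i => ((A.mulVec y - b) i)⁻¹) := by
    apply Matrix.inv_eq_right_inv
    rw [Matrix.diagonal_mul_diagonal]
    ext i j
    rcases eq_or_ne i j with rfl | h
    · simpa using mul_inv_cancel₀ (hy i)
    · simp [Matrix.diagonal_apply_ne _ h, Matrix.one_apply_ne h]
  unfold Amat
  rw [hinvd]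
  ext i j
  simp [Matrix.diagonal_mul]

lemma NfunAux_eq {m n : ℕ} (A : Matrix (Fin m) (Fin n) ℝ) (b : Fin m → ℝ) (lam : ℝ)
    (y : Fin n → ℝ) (hy : ∀ i, (A.mulVec y - b) i ≠ 0) :
    Matrix.of (NfunAux A b lam y) =
      (Amat A b y)ᵀ * Amat A b y + lam • (1 : Matrix (Fin n) (Fin n) ℝ) := by
  rw [Amat_eq A b y hy]
  ext k l
  simp only [Matrix.of_apply, Matrix.add_apply, Matrix.mul_apply, Matrix.transpose_apply,
    Matrix.smul_apply, Matrix.one_apply, smul_eq_mul, NfunAux, mul_ite, mul_one, mul_zero]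
  congr 1
  exact Finset.sum_congr rfl fun i _ => by ring

lemma posDef_aux {m n : ℕ} (A : Matrix (Fin m) (Fin n) ℝ) (b : Fin m → ℝ) {lam : ℝ}
    (hlam : 0 < lam) (y : Fin n → ℝ) :
    ((Amat A b y)ᵀ * Amat A b y + lam • (1 : Matrix (Fin n) (Fin n) ℝ)).PosDef := by
  have h1 : ((Amat A b y)ᵀ * Amat A b y).PosSemidef := by
    have := Matrix.posSemidef_conjTranspose_mul_self (Amat A b y)
    simpa using this
  have h2 : (lam • (1 : Matrix (Fin n) (Fin n) ℝ)).PosDef := by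
    have h3 : lam • (1 : Matrix (Fin n) (Fin n) ℝ) = Matrix.diagonal (fun _ => lam) := by
      ext i j
      rcases eq_or_ne i j with rfl | h
      · simp
      · simp [Matrix.one_apply_ne h, Matrix.diagonal_apply_ne _ h]
    rw [h3]
    exact Matrix.posDef_diagonal_iff.mpr fun _ => hlam
  exact Matrix.PosDef.posSemidef_add h1 h2

lemma sum_perm4 {m n : ℕ} (f : Fin n → Fin m → Fin n → Fin n → ℝ) :
    ∑ j, ∑ i, ∑ k, ∑ l, f j i k l = ∑ k, ∑ l, ∑ i, ∑ j, f j i k l :=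
  calc ∑ j, ∑ i, ∑ k, ∑ l, f j i k l
      = ∑ i, ∑ j, ∑ k, ∑ l, f j i k l := Finset.sum_comm
    _ = ∑ i, ∑ k, ∑ j, ∑ l, f j i k l :=
        Finset.sum_congr rfl fun i _ => Finset.sum_comm
    _ = ∑ i, ∑ k, ∑ l, ∑ j, f j i k l :=
        Finset.sum_congr rfl fun i _ => Finset.sum_congr rfl fun k _ => Finset.sum_comm
    _ = ∑ k, ∑ i, ∑ l, ∑ j, f j i k l := Finset.sum_comm
    _ = ∑ k, ∑ l, ∑ i, ∑ j, f j i k l :=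
        Finset.sum_congr rfl fun k _ => Finset.sum_comm

/-- Gradient of the regularized volumetric barrier: at a strictly feasible point `x`,
`f(x) = ½ log det(AᵀS_x⁻²A + λI)` is differentiable with `∇f(x) = −A_xᵀψ(x)`. -/
theorem stmt16 (m n : ℕ) (A : Matrix (Fin m) (Fin n) ℝ) (b : Fin m → ℝ)
    (lam : ℝ) (hlam : 0 < lam)
    (x : Fin n → ℝ) (hx : ∀ i, 0 < (A.mulVec x - b) i) :
    HasFDerivAt (volBarrier A b lam)
      (∑ i : Fin n,
        (-((Amat A b x)ᵀ.mulVec (psiReg A b lam x)) i) •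
          (ContinuousLinearMap.proj i : (Fin n → ℝ) →L[ℝ] ℝ)) x := by
  classical
  set v : Fin m → ℝ := A.mulVec x - b with hv
  have hv0 : ∀ i, v i ≠ 0 := fun i => (hx i).ne'
  -- basic continuous linear maps
  set L : Fin m → ((Fin n → ℝ) →L[ℝ] ℝ) :=
    fun i => (ContinuousLinearMap.proj i).comp (LinearMap.toContinuousLinearMap A.mulVecLin)
    with hL
  have hLapp : ∀ (i : Fin m) (H : Fin n → ℝ), L i H = ∑ j, A i j * H j := by
    intro i H
    simp [hL, Matrix.mulVec, dotProduct]
  have hmv : ∀ i, HasFDerivAt (fun y : Fin n → ℝ => (A.mulVec y - b) i) (L i) x := by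
    intro i
    have h2 := ((L i).hasFDerivAt (x := x)).sub_const (b i)
    have h3 : (fun y : Fin n → ℝ => (A.mulVec y - b) i) = fun y => L i y - b i := by
      funext y; simp [hL]
    rw [h3]; exact h2
  set D1 : Fin m → ((Fin n → ℝ) →L[ℝ] ℝ) := fun i => (-(v i ^ 2)⁻¹) • L i with hD1
  have hinv : ∀ i, HasFDerivAt (fun y : Fin n → ℝ => ((A.mulVec y - b) i)⁻¹) (D1 i) x :=
    fun i => (hasDerivAt_inv (hv0 i)).comp_hasFDerivAt x (hmv i)
  set D2 : Fin m → ((Fin n → ℝ) →L[ℝ] ℝ) := fun i => (v i)⁻¹ • D1 i + (v i)⁻¹ • D1 i with hD2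
  have hprod : ∀ i, HasFDerivAt
      (fun y : Fin n → ℝ => ((A.mulVec y - b) i)⁻¹ * ((A.mulVec y - b) i)⁻¹) (D2 i) x :=
    fun i => (hinv i).mul (hinv i)
  set D3 : Fin n → Fin n → ((Fin n → ℝ) →L[ℝ] ℝ) := fun k l => ∑ i, (A i k * A i l) • D2 i
    with hD3
  have hentry : ∀ k l, HasFDerivAt (fun y => NfunAux A b lam y k l) (D3 k l) x := by
    intro k l
    exact (HasFDerivAt.fun_sum (u := Finset.univ)
      fun i _ => ((hprod i).const_mul (A i k * A i l))).add_const (if k = l then lam else 0)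
  set Φ : (Fin n → ℝ) →L[ℝ] (Fin n → Fin n → ℝ) :=
    ContinuousLinearMap.pi (fun k => ContinuousLinearMap.pi (fun l => D3 k l)) with hΦ
  have hN : HasFDerivAt (NfunAux A b lam) Φ x := by
    apply hasFDerivAt_pi''
    intro k
    rw [hΦ, ContinuousLinearMap.proj_pi]
    apply hasFDerivAt_pi''
    intro l
    rw [ContinuousLinearMap.proj_pi]
    exact hentry k l
  have hdet : HasFDerivAt (fun y => detCML n (NfunAux A b lam y))
      (((detCML n).linearDeriv (NfunAux A b lam x)).comp Φ) x :=
    ((detCML n).hasFDerivAt (NfunAux A b lam x)).comp x hN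
  have hdetpos : 0 < detCML n (NfunAux A b lam x) := by
    rw [detCML_apply, NfunAux_eq A b lam x hv0]
    exact (posDef_aux A b hlam x).det_pos
  have hlog := hdet.log hdetpos.ne'
  have hhalf := hlog.const_mul (1 / 2 : ℝ)
  have hev : ∀ᶠ y in nhds x, ∀ i, (0 : ℝ) < (A.mulVec y - b) i := by
    rw [Filter.eventually_all]
    intro i
    have hc : Continuous fun y : Fin n → ℝ => (A.mulVec y - b) i := by
      have h3 : (fun y : Fin n → ℝ => (A.mulVec y - b) i) = fun y => L i y - b i := by
        funext y; simp [hL]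
      rw [h3]; exact (L i).continuous.sub continuous_const
    filter_upwards [hc.continuousAt.preimage_mem_nhds (Ioi_mem_nhds (hx i))] with y hy
    exact hy
  have hcongr : volBarrier A b lam =ᶠ[nhds x]
      fun y => (1 / 2 : ℝ) * Real.log (detCML n (NfunAux A b lam y)) := by
    filter_upwards [hev] with y hy
    unfold volBarrier
    rw [detCML_apply, NfunAux_eq A b lam y (fun i => (hy i).ne')]
  have hfinal := hhalf.congr_of_eventuallyEq hcongr
  refine hfinal.congr_fderiv (Eq.symm ?_)
  apply ContinuousLinearMap.ext
  intro H
  simp only [ContinuousLinearMap.sum_apply, ContinuousLinearMap.smul_apply,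
    ContinuousLinearMap.proj_apply, smul_eq_mul, ContinuousLinearMap.coe_comp',
    Function.comp_apply, ContinuousMultilinearMap.linearDeriv_apply]
  have hofS : Matrix.of (NfunAux A b lam x)
      = (Amat A b x)ᵀ * Amat A b x + lam • (1 : Matrix (Fin n) (Fin n) ℝ) :=
    NfunAux_eq A b lam x hv0
  have hdetS : ((Amat A b x)ᵀ * Amat A b x + lam • (1 : Matrix (Fin n) (Fin n) ℝ)).det ≠ 0 :=
    (posDef_aux A b hlam x).det_pos.ne'
  have hdetCML_S : detCML n (NfunAux A b lam x)
      = ((Amat A b x)ᵀ * Amat A b x + lam • (1 : Matrix (Fin n) (Fin n) ℝ)).det := by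
    rw [detCML_apply, hofS]
  set W : Matrix (Fin n) (Fin n) ℝ :=
    ((Amat A b x)ᵀ * Amat A b x + lam • (1 : Matrix (Fin n) (Fin n) ℝ))⁻¹ with hW
  have hadj : ∀ l k : Fin n,
      ((Amat A b x)ᵀ * Amat A b x + lam • (1 : Matrix (Fin n) (Fin n) ℝ)).adjugate l k
        = ((Amat A b x)ᵀ * Amat A b x + lam • (1 : Matrix (Fin n) (Fin n) ℝ)).det * W l k := by
    intro l k
    rw [hW, Matrix.inv_def]
    simp only [Matrix.smul_apply, Ring.inverse_eq_inv', smul_eq_mul]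
    field_simp
  have hupd : ∀ k : Fin n, detCML n (Function.update (NfunAux A b lam x) k (Φ H k))
      = ∑ l, (D3 k l H) *
          (((Amat A b x)ᵀ * Amat A b x + lam • (1 : Matrix (Fin n) (Fin n) ℝ)).det * W l k) := by
    intro k
    rw [detCML_update, hofS]
    refine Finset.sum_congr rfl fun l _ => ?_
    rw [hadj l k]
    try congr 1
    try simp [hΦ]
  simp only [hupd, hdetCML_S]
  have hpull : ∑ k, ∑ l, (D3 k l H) *
        (((Amat A b x)ᵀ * Amat A b x + lam • (1 : Matrix (Fin n) (Fin n) ℝ)).det * W l k)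
      = ((Amat A b x)ᵀ * Amat A b x + lam • (1 : Matrix (Fin n) (Fin n) ℝ)).det *
          ∑ k, ∑ l, (D3 k l H) * W l k := by
    rw [Finset.mul_sum]
    exact Finset.sum_congr rfl fun k _ => by
      rw [Finset.mul_sum]; exact Finset.sum_congr rfl fun l _ => by ring
  rw [hpull, inv_mul_cancel_left₀ hdetS]
  have hAment : ∀ (i : Fin m) (j : Fin n), Amat A b x i j = (v i)⁻¹ * A i j := by
    intro i j
    rw [Amat_eq A b x hv0]
    simp [hv]
  have hpsi : ∀ i, psiReg A b lam x i
      = ∑ k, (∑ l, ((v i)⁻¹ * A i l) * W l k) * ((v i)⁻¹ * A i k) := by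
    intro i
    unfold psiReg
    rw [← hW]
    simp only [Matrix.mul_apply, Matrix.transpose_apply, hAment]
  have hmulvec : ∀ j, ((Amat A b x)ᵀ.mulVec (psiReg A b lam x)) j
      = ∑ i, ((v i)⁻¹ * A i j) * psiReg A b lam x i := by
    intro j
    simp only [Matrix.mulVec, dotProduct, Matrix.transpose_apply, hAment]
  have hD3app : ∀ k l : Fin n, D3 k l H
      = ∑ i, (A i k * A i l) *
          ((v i)⁻¹ * (-(v i ^ 2)⁻¹ * (∑ j, A i j * H j)) +
           (v i)⁻¹ * (-(v i ^ 2)⁻¹ * (∑ j, A i j * H j))) := by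
    intro k l
    simp only [hD3, hD2, hD1, ContinuousLinearMap.sum_apply, ContinuousLinearMap.smul_apply,
      ContinuousLinearMap.add_apply, smul_eq_mul, hLapp]
  simp only [hmulvec, hpsi, hD3app]
  simp only [Finset.mul_sum, Finset.sum_mul, mul_add, add_mul, neg_mul, mul_neg,
    Finset.sum_neg_distrib, neg_neg]
  simp only [← neg_add, ← Finset.sum_add_distrib, Finset.sum_neg_distrib]
  rw [neg_inj]
  rw [sum_perm4 (fun j i k l => (v i)⁻¹ * A i j *
    ((v i)⁻¹ * A i l * W l k * ((v i)⁻¹ * A i k)) * H j)]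
  refine Finset.sum_congr rfl fun k _ => Finset.sum_congr rfl fun l _ =>
    Finset.sum_congr rfl fun i _ => Finset.sum_congr rfl fun j _ => ?_
  rw [pow_two, mul_inv]
  try ring
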